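/- arXiv:2402.02867 — 4 statements merged into one kernel-verified Lean document; each statement's English description precedes it below -/
import Mathlib

section
/- (Theorem 1, estimating equations of the minimum RP estimator.) For every α > 0, every x ∈ ℝ^{k+1}, and every standard basis vector y ∈ ℝ^{d+1}, the map β ↦ s^{(α)}(y,β) := Υ(α,y)/Γ(α)^{α/(1+α)} is differentiable, and for each m ∈ {1,…,d} its gradient with respect to the block β_m ∈ ℝ^{k+1} equals α times the m-th block of Ψ_α(β,x,y), i.e. equals α·Γ(α)^{−α/(1+α)}·(π_m(x,β)^α y_m − (Υ(α,y)/Γ(α))·π_m(x,β)^{α+1})·x. Consequently any interior maximizer β of (1/n)Σ_{i=1}^n s^{(α)}(y_i,β) (over data (x_i,y_i)) satisfies Σ_{i=1}^n Ψ_α(β,x_i,y_i) = 0. -/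
open Real Matrix Filter

noncomputable section

/-- PLRM probabilities. -/
def plrmPi {d k : ℕ} (x : Fin (k + 1) → ℝ) (β : Fin d → Fin (k + 1) → ℝ)
    (j : Fin (d + 1)) : ℝ :=
  (if h : (j : ℕ) < d then Real.exp (∑ t, x t * β ⟨j, h⟩ t) else 1) /
    (1 + ∑ s : Fin d, Real.exp (∑ t, x t * β s t))

/-- `Γ(α) = ∑_{j=1}^{d+1} π_j(x,β)^{α+1}`. -/
def Gam {d k : ℕ} (α : ℝ) (x : Fin (k + 1) → ℝ) (β : Fin d → Fin (k + 1) → ℝ) : ℝ :=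
  ∑ j, plrmPi x β j ^ (α + 1)

/-- `Υ(α,y) = ∑_{j=1}^{d+1} π_j(x,β)^α y_j`. -/
def Ups {d k : ℕ} (α : ℝ) (x : Fin (k + 1) → ℝ) (β : Fin d → Fin (k + 1) → ℝ)
    (y : Fin (d + 1) → ℝ) : ℝ :=
  ∑ j, plrmPi x β j ^ α * y j

/-- `s^{(α)}(y,β) = Υ(α,y)/Γ(α)^{α/(1+α)}`. -/
def sAlpha {d k : ℕ} (α : ℝ) (x : Fin (k + 1) → ℝ) (β : Fin d → Fin (k + 1) → ℝ)
    (y : Fin (d + 1) → ℝ) : ℝ :=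
  Ups α x β y / Gam α x β ^ (α / (1 + α))

/-- The `(m,t)` coordinate of the RP score `Ψ_α(β,x,y)`: the `m`-th block of length `k+1`
is `Γ(α)^{−α/(1+α)}·(π_m^α y_m − (Υ(α,y)/Γ(α))·π_m^{α+1})·x`. -/
def psiBlock {d k : ℕ} (α : ℝ) (x : Fin (k + 1) → ℝ) (β : Fin d → Fin (k + 1) → ℝ)
    (y : Fin (d + 1) → ℝ) (m : Fin d) (t : Fin (k + 1)) : ℝ :=
  Gam α x β ^ (-(α / (1 + α))) *
    (plrmPi x β m.castSucc ^ α * y m.castSucc -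
      Ups α x β y / Gam α x β * plrmPi x β m.castSucc ^ (α + 1)) * x t

def Lmap {d k : ℕ} (x : Fin (k + 1) → ℝ) (s : Fin d) :
    (Fin d → Fin (k + 1) → ℝ) →L[ℝ] ℝ :=
  (∑ t, x t • ContinuousLinearMap.proj t).comp (ContinuousLinearMap.proj s)

lemma Lmap_apply {d k : ℕ} (x : Fin (k + 1) → ℝ) (s : Fin d)
    (b : Fin d → Fin (k + 1) → ℝ) : Lmap x s b = ∑ t, x t * b s t := by
  simp [Lmap, ContinuousLinearMap.sum_apply]

lemma hasFDerivAt_L {d k : ℕ} (x : Fin (k + 1) → ℝ) (s : Fin d)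
    (β : Fin d → Fin (k + 1) → ℝ) :
    HasFDerivAt (fun b : Fin d → Fin (k + 1) → ℝ => ∑ t, x t * b s t) (Lmap x s) β := by
  have h : ⇑(Lmap x s) = fun b : Fin d → Fin (k + 1) → ℝ => ∑ t, x t * b s t :=
    funext (Lmap_apply x s)
  rw [← h]; exact (Lmap x s).hasFDerivAt

lemma den_pos {d k : ℕ} (x : Fin (k + 1) → ℝ) (β : Fin d → Fin (k + 1) → ℝ) :
    0 < 1 + ∑ s : Fin d, Real.exp (∑ t, x t * β s t) := by positivity

lemma plrmPi_pos {d k : ℕ} (x : Fin (k + 1) → ℝ) (β : Fin d → Fin (k + 1) → ℝ)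
    (j : Fin (d + 1)) : 0 < plrmPi x β j := by
  rw [plrmPi]
  apply div_pos ?_ (den_pos x β)
  split_ifs with h
  exacts [Real.exp_pos _, one_pos]

lemma plrmPi_castSucc {d k : ℕ} (x : Fin (k + 1) → ℝ) (β : Fin d → Fin (k + 1) → ℝ)
    (s : Fin d) : plrmPi x β s.castSucc =
      Real.exp (∑ t, x t * β s t) / (1 + ∑ s' : Fin d, Real.exp (∑ t, x t * β s' t)) := by
  simp [plrmPi]

lemma HasFDerivAt.div' {E : Type*} [NormedAddCommGroup E] [NormedSpace ℝ E]
    {f g : E → ℝ} {f' g' : E →L[ℝ] ℝ} {x : E}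
    (hf : HasFDerivAt f f' x) (hg : HasFDerivAt g g' x) (h : g x ≠ 0) :
    HasFDerivAt (fun y => f y / g y) (((g x) ^ 2)⁻¹ • (g x • f' - f x • g')) x := by
  have hinv : HasFDerivAt (fun y => (g y)⁻¹) ((-((g x) ^ 2)⁻¹) • g') x := by
    have := (hasDerivAt_inv h).comp_hasFDerivAt x hg
    exact this
  have hm := hf.mul hinv
  simp only [div_eq_mul_inv]
  refine HasFDerivAt.congr_fderiv hm (Eq.symm ?_)
  ext v
  simp only [ContinuousLinearMap.smul_apply, ContinuousLinearMap.sub_apply,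
    ContinuousLinearMap.add_apply, smul_eq_mul]
  field_simp
  ring


lemma hasFDerivAt_den {d k : ℕ} (x : Fin (k + 1) → ℝ) (β : Fin d → Fin (k + 1) → ℝ) :
    HasFDerivAt (fun b : Fin d → Fin (k + 1) → ℝ =>
        1 + ∑ s : Fin d, Real.exp (∑ t, x t * b s t))
      (∑ s : Fin d, Real.exp (∑ t, x t * β s t) • Lmap x s) β :=
  (HasFDerivAt.fun_sum fun s _ => (hasFDerivAt_L x s β).exp).const_add 1

lemma hasFDerivAt_plrmPi {d k : ℕ} (x : Fin (k + 1) → ℝ) (β : Fin d → Fin (k + 1) → ℝ)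
    (j : Fin (d + 1)) :
    HasFDerivAt (fun b => plrmPi x b j)
      (plrmPi x β j • ∑ s : Fin d,
        ((if j = s.castSucc then (1 : ℝ) else 0) - plrmPi x β s.castSucc) • Lmap x s) β := by
  have hDne := (den_pos x β).ne'
  by_cases hj : (j : ℕ) < d
  · set jd : Fin d := ⟨j, hj⟩ with hjd
    have hjcast : j = jd.castSucc := by ext; simp [hjd]
    have hnum : HasFDerivAt (fun b : Fin d → Fin (k + 1) → ℝ =>
        Real.exp (∑ t, x t * b jd t)) (Real.exp (∑ t, x t * β jd t) • Lmap x jd) β :=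
      (hasFDerivAt_L x jd β).exp
    have hfun : (fun b : Fin d → Fin (k + 1) → ℝ => plrmPi x b j) = fun b =>
        Real.exp (∑ t, x t * b jd t) / (1 + ∑ s : Fin d, Real.exp (∑ t, x t * b s t)) := by
      funext b; rw [hjcast, plrmPi_castSucc]
    rw [hfun]
    have H := hnum.div' (hasFDerivAt_den x β) hDne
    refine HasFDerivAt.congr_fderiv H (Eq.symm ?_)
    ext v
    simp only [ContinuousLinearMap.smul_apply, ContinuousLinearMap.sub_apply,
      ContinuousLinearMap.sum_apply, smul_eq_mul, ContinuousLinearMap.coe_smul',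
      Pi.smul_apply, ContinuousLinearMap.coe_sum', Finset.sum_apply]
    rw [hjcast]
    simp only [plrmPi_castSucc, Fin.castSucc_inj]
    simp only [sub_mul, ite_mul, one_mul, zero_mul, Finset.sum_sub_distrib,
      Finset.sum_ite_eq', Finset.mem_univ, if_true, div_mul_eq_mul_div, ← Finset.sum_div]
    field_simp
    simp only [Finset.sum_ite_eq, Finset.mem_univ, if_true]
    ring
  · have hfun : (fun b : Fin d → Fin (k + 1) → ℝ => plrmPi x b j) = fun b =>
        (1 : ℝ) / (1 + ∑ s : Fin d, Real.exp (∑ t, x t * b s t)) := by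
      funext b; rw [plrmPi, dif_neg hj]
    rw [hfun]
    have H := (hasFDerivAt_const (1 : ℝ) β).div' (hasFDerivAt_den x β) hDne
    refine HasFDerivAt.congr_fderiv H (Eq.symm ?_)
    ext v
    have hif : ∀ s : Fin d, (if j = s.castSucc then (1 : ℝ) else 0) = 0 := by
      intro s
      rw [if_neg]
      intro h
      exact hj (by rw [h]; simpa using s.isLt)
    simp only [ContinuousLinearMap.smul_apply, ContinuousLinearMap.sub_apply,
      ContinuousLinearMap.sum_apply, smul_eq_mul, ContinuousLinearMap.coe_smul',
      Pi.smul_apply, ContinuousLinearMap.coe_sum', Finset.sum_apply,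
      ContinuousLinearMap.zero_apply, hif]
    simp only [plrmPi, dif_neg hj, zero_sub, neg_mul, Finset.sum_neg_distrib,
      div_mul_eq_mul_div, ← Finset.sum_div]
    field_simp
    simp only [Fin.coe_castSucc, Fin.is_lt, ↓reduceDIte, Fin.eta]
    ring

def coefN {d k : ℕ} (α : ℝ) (x : Fin (k + 1) → ℝ) (β : Fin d → Fin (k + 1) → ℝ)
    (y : Fin (d + 1) → ℝ) (s : Fin d) : ℝ :=
  α * Gam α x β ^ (-(α / (1 + α))) *
    (plrmPi x β s.castSucc ^ α * y s.castSucc -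
      Ups α x β y / Gam α x β * plrmPi x β s.castSucc ^ (α + 1))

def Dnice {d k : ℕ} (α : ℝ) (x : Fin (k + 1) → ℝ) (β : Fin d → Fin (k + 1) → ℝ)
    (y : Fin (d + 1) → ℝ) : (Fin d → Fin (k + 1) → ℝ) →L[ℝ] ℝ :=
  ∑ s : Fin d, coefN α x β y s • Lmap x s

lemma Gam_pos {d k : ℕ} (α : ℝ) (x : Fin (k + 1) → ℝ) (β : Fin d → Fin (k + 1) → ℝ) :
    0 < Gam α x β :=
  Finset.sum_pos (fun j _ => Real.rpow_pos_of_pos (plrmPi_pos x β j) _) Finset.univ_nonempty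

lemma hasFDerivAt_sAlpha {d k : ℕ} (α : ℝ) (hα : 0 < α) (x : Fin (k + 1) → ℝ)
    (y : Fin (d + 1) → ℝ) (β : Fin d → Fin (k + 1) → ℝ) :
    HasFDerivAt (fun b => sAlpha α x b y) (Dnice α x β y) β := by
  have hP : ∀ j, 0 < plrmPi x β j := plrmPi_pos x β
  have hG : 0 < Gam α x β := Gam_pos α x β
  have h1α : (1 : ℝ) + α ≠ 0 := by positivity
  have hπ := hasFDerivAt_plrmPi x β
  have hGam : HasFDerivAt (fun b => Gam α x b)
      (∑ j, ((α + 1) * plrmPi x β j ^ (α + 1 - 1)) •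
        (plrmPi x β j • ∑ s : Fin d,
          ((if j = s.castSucc then (1 : ℝ) else 0) - plrmPi x β s.castSucc) • Lmap x s)) β := by
    simp only [Gam]
    exact HasFDerivAt.fun_sum fun j _ => (hπ j).rpow_const (Or.inl (hP j).ne')
  have hUps : HasFDerivAt (fun b => Ups α x b y)
      (∑ j, y j • ((α * plrmPi x β j ^ (α - 1)) •
        (plrmPi x β j • ∑ s : Fin d,
          ((if j = s.castSucc then (1 : ℝ) else 0) - plrmPi x β s.castSucc) • Lmap x s))) β := by
    simp only [Ups]
    exact HasFDerivAt.fun_sum fun j _ => ((hπ j).rpow_const (Or.inl (hP j).ne')).mul_const (y j)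
  have hGc : HasFDerivAt (fun b => Gam α x b ^ (α / (1 + α)))
      ((α / (1 + α) * Gam α x β ^ (α / (1 + α) - 1)) •
        ∑ j, ((α + 1) * plrmPi x β j ^ (α + 1 - 1)) •
          (plrmPi x β j • ∑ s : Fin d,
            ((if j = s.castSucc then (1 : ℝ) else 0) - plrmPi x β s.castSucc) • Lmap x s)) β :=
    hGam.rpow_const (Or.inl hG.ne')
  have H := hUps.div' hGc (Real.rpow_pos_of_pos hG _).ne'
  have hfun : (fun b => sAlpha α x b y) =
      fun b => Ups α x b y / Gam α x b ^ (α / (1 + α)) := rfl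
  rw [hfun]
  refine HasFDerivAt.congr_fderiv H (Eq.symm ?_)
  ext v
  simp only [Dnice, ContinuousLinearMap.smul_apply, ContinuousLinearMap.sub_apply,
    ContinuousLinearMap.sum_apply, smul_eq_mul, ContinuousLinearMap.coe_smul',
    Pi.smul_apply, ContinuousLinearMap.coe_sum', Finset.sum_apply]
  -- abbreviations
  have hswap : ∀ c : Fin (d + 1) → ℝ,
      (∑ j, c j * (plrmPi x β j * ∑ s : Fin d,
        ((if j = s.castSucc then (1 : ℝ) else 0) - plrmPi x β s.castSucc) * Lmap x s v)) =
      ∑ s : Fin d, (∑ j, (c j * plrmPi x β j) *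
        ((if j = s.castSucc then (1 : ℝ) else 0) - plrmPi x β s.castSucc)) * Lmap x s v := by
    intro c
    simp_rw [Finset.mul_sum]
    rw [Finset.sum_comm]
    refine Finset.sum_congr rfl fun s _ => ?_
    rw [Finset.sum_mul]
    exact Finset.sum_congr rfl fun j _ => by ring
  have hPc : ∀ j (p : ℝ), plrmPi x β j ^ p * plrmPi x β j = plrmPi x β j ^ (p + 1) :=
    fun j p => (Real.rpow_add_one (hP j).ne' p).symm
  have hinner1 : ∀ s : Fin d,
      (∑ j, ((y j * (α * plrmPi x β j ^ (α - 1))) * plrmPi x β j) *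
        ((if j = s.castSucc then (1 : ℝ) else 0) - plrmPi x β s.castSucc)) =
      α * (plrmPi x β s.castSucc ^ α * y s.castSucc -
        plrmPi x β s.castSucc * Ups α x β y) := by
    intro s
    have hterm : ∀ j, ((y j * (α * plrmPi x β j ^ (α - 1))) * plrmPi x β j) *
        ((if j = s.castSucc then (1 : ℝ) else 0) - plrmPi x β s.castSucc) =
        (if j = s.castSucc then α * (plrmPi x β j ^ α * y j) else 0) -
          α * plrmPi x β s.castSucc * (plrmPi x β j ^ α * y j) := by
      intro j
      have h1 : plrmPi x β j ^ (α - 1) * plrmPi x β j = plrmPi x β j ^ α := by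
        rw [hPc j (α - 1), sub_add_cancel]
      split_ifs with h
      · rw [← h1]; ring
      · rw [← h1]; ring
    rw [Finset.sum_congr rfl fun j _ => hterm j, Finset.sum_sub_distrib,
      Finset.sum_ite_eq' Finset.univ s.castSucc, if_pos (Finset.mem_univ _),
      ← Finset.mul_sum]
    have hU : (∑ j, plrmPi x β j ^ α * y j) = Ups α x β y := rfl
    rw [hU]; ring
  have hinner2 : ∀ s : Fin d,
      (∑ j, (((α + 1) * plrmPi x β j ^ (α + 1 - 1)) * plrmPi x β j) *
        ((if j = s.castSucc then (1 : ℝ) else 0) - plrmPi x β s.castSucc)) =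
      (α + 1) * (plrmPi x β s.castSucc ^ (α + 1) -
        plrmPi x β s.castSucc * Gam α x β) := by
    intro s
    have hterm : ∀ j, (((α + 1) * plrmPi x β j ^ (α + 1 - 1)) * plrmPi x β j) *
        ((if j = s.castSucc then (1 : ℝ) else 0) - plrmPi x β s.castSucc) =
        (if j = s.castSucc then (α + 1) * plrmPi x β j ^ (α + 1) else 0) -
          (α + 1) * plrmPi x β s.castSucc * plrmPi x β j ^ (α + 1) := by
      intro j
      have h1 : plrmPi x β j ^ (α + 1 - 1) * plrmPi x β j = plrmPi x β j ^ (α + 1) := by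
        rw [hPc j (α + 1 - 1), sub_add_cancel]
      split_ifs with h
      · rw [← h1]; ring
      · rw [← h1]; ring
    rw [Finset.sum_congr rfl fun j _ => hterm j, Finset.sum_sub_distrib,
      Finset.sum_ite_eq' Finset.univ s.castSucc, if_pos (Finset.mem_univ _),
      ← Finset.mul_sum]
    have hG' : (∑ j, plrmPi x β j ^ (α + 1)) = Gam α x β := rfl
    rw [hG']; ring
  have e1 : (∑ j : Fin (d + 1), y j * (α * plrmPi x β j ^ (α - 1) *
        (plrmPi x β j * ∑ s : Fin d,
          ((if j = s.castSucc then (1 : ℝ) else 0) - plrmPi x β s.castSucc) * Lmap x s v))) =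
      ∑ s : Fin d, (α * (plrmPi x β s.castSucc ^ α * y s.castSucc -
        plrmPi x β s.castSucc * Ups α x β y)) * Lmap x s v := by
    calc (∑ j : Fin (d + 1), y j * (α * plrmPi x β j ^ (α - 1) *
          (plrmPi x β j * ∑ s : Fin d,
            ((if j = s.castSucc then (1 : ℝ) else 0) - plrmPi x β s.castSucc) * Lmap x s v)))
        = ∑ j : Fin (d + 1), (y j * (α * plrmPi x β j ^ (α - 1))) *
            (plrmPi x β j * ∑ s : Fin d,
              ((if j = s.castSucc then (1 : ℝ) else 0) - plrmPi x β s.castSucc) * Lmap x s v) :=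
          Finset.sum_congr rfl fun j _ => by ring
      _ = ∑ s : Fin d, (∑ j : Fin (d + 1), (y j * (α * plrmPi x β j ^ (α - 1))) *
            plrmPi x β j * ((if j = s.castSucc then (1 : ℝ) else 0) - plrmPi x β s.castSucc)) *
              Lmap x s v := hswap _
      _ = ∑ s : Fin d, (α * (plrmPi x β s.castSucc ^ α * y s.castSucc -
            plrmPi x β s.castSucc * Ups α x β y)) * Lmap x s v :=
          Finset.sum_congr rfl fun s _ => by rw [hinner1 s]
  have e2 : (∑ j : Fin (d + 1), (α + 1) * plrmPi x β j ^ (α + 1 - 1) *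
        (plrmPi x β j * ∑ s : Fin d,
          ((if j = s.castSucc then (1 : ℝ) else 0) - plrmPi x β s.castSucc) * Lmap x s v)) =
      ∑ s : Fin d, ((α + 1) * (plrmPi x β s.castSucc ^ (α + 1) -
        plrmPi x β s.castSucc * Gam α x β)) * Lmap x s v := by
    calc (∑ j : Fin (d + 1), (α + 1) * plrmPi x β j ^ (α + 1 - 1) *
          (plrmPi x β j * ∑ s : Fin d,
            ((if j = s.castSucc then (1 : ℝ) else 0) - plrmPi x β s.castSucc) * Lmap x s v))
        = ∑ s : Fin d, (∑ j : Fin (d + 1), ((α + 1) * plrmPi x β j ^ (α + 1 - 1)) *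
            plrmPi x β j * ((if j = s.castSucc then (1 : ℝ) else 0) - plrmPi x β s.castSucc)) *
              Lmap x s v := hswap _
      _ = ∑ s : Fin d, ((α + 1) * (plrmPi x β s.castSucc ^ (α + 1) -
            plrmPi x β s.castSucc * Gam α x β)) * Lmap x s v :=
          Finset.sum_congr rfl fun s _ => by rw [hinner2 s]
  rw [e1, e2]
  simp only [Finset.mul_sum]
  rw [← Finset.sum_sub_distrib]
  simp only [Finset.mul_sum]
  refine Finset.sum_congr rfl fun s _ => ?_
  have hGcne : Gam α x β ^ (α / (1 + α)) ≠ 0 :=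
    (Real.rpow_pos_of_pos hG _).ne'
  rw [coefN, Real.rpow_neg hG.le, Real.rpow_sub_one hG.ne']
  field_simp
  ring

lemma Dnice_apply {d k : ℕ} (α : ℝ) (x : Fin (k + 1) → ℝ) (β : Fin d → Fin (k + 1) → ℝ)
    (y : Fin (d + 1) → ℝ) (m : Fin d) (t : Fin (k + 1)) :
    Dnice α x β y (Pi.single m (Pi.single t 1)) = α * psiBlock α x β y m t := by
  have hL : ∀ s : Fin d,
      Lmap x s (Pi.single m (Pi.single t 1) : Fin d → Fin (k + 1) → ℝ) =
        if s = m then x t else 0 := by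
    intro s
    rw [Lmap_apply]
    rcases eq_or_ne s m with h | h
    · subst h
      simp [Pi.single_apply]
    · simp [Pi.single_apply, h]
  simp only [Dnice, ContinuousLinearMap.sum_apply, ContinuousLinearMap.smul_apply,
    smul_eq_mul, hL, mul_ite, mul_zero, Finset.sum_ite_eq', Finset.mem_univ, if_true]
  rw [coefN, psiBlock]
  ring

/-- Theorem 1, estimating equations of the minimum RP estimator:
for `α > 0`, any covariate `x` and any standard basis vector `y`, the map
`β ↦ s^{(α)}(y,β)` is differentiable with block-`m` gradient `α·Ψ_α(β,x,y)_m`;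
consequently any (interior) maximizer `β` of `(1/n)∑_i s^{(α)}(y_i,β)` satisfies
the estimating equations `∑_i Ψ_α(β,x_i,y_i) = 0`. -/
theorem statement3 (d k n : ℕ) (hd : 1 ≤ d) (hk : 1 ≤ k) (α : ℝ) (hα : 0 < α)
    (X : Fin n → Fin (k + 1) → ℝ) (Y : Fin n → Fin (d + 1) → ℝ)
    (hY : ∀ i, ∃ j, Y i = Pi.single j 1) :
    (∀ (x : Fin (k + 1) → ℝ) (y : Fin (d + 1) → ℝ), (∃ j, y = Pi.single j 1) →
      ∀ β : Fin d → Fin (k + 1) → ℝ,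
        DifferentiableAt ℝ (fun b : Fin d → Fin (k + 1) → ℝ => sAlpha α x b y) β ∧
        ∀ (m : Fin d) (t : Fin (k + 1)),
          fderiv ℝ (fun b : Fin d → Fin (k + 1) → ℝ => sAlpha α x b y) β
              (Pi.single m (Pi.single t 1)) =
            α * psiBlock α x β y m t) ∧
    ∀ β : Fin d → Fin (k + 1) → ℝ,
      (∀ b : Fin d → Fin (k + 1) → ℝ,
          (1 / (n : ℝ)) * ∑ i, sAlpha α (X i) b (Y i) ≤
            (1 / (n : ℝ)) * ∑ i, sAlpha α (X i) β (Y i)) →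
      ∀ (m : Fin d) (t : Fin (k + 1)), ∑ i, psiBlock α (X i) β (Y i) m t = 0 := by
  constructor
  · intro x y _ β
    refine ⟨(hasFDerivAt_sAlpha α hα x y β).differentiableAt, fun m t => ?_⟩
    rw [(hasFDerivAt_sAlpha α hα x y β).fderiv, Dnice_apply]
  · intro β hmax m t
    rcases Nat.eq_zero_or_pos n with hn | hn
    · subst hn
      simp
    · have hf : HasFDerivAt
          (fun b : Fin d → Fin (k + 1) → ℝ => (1 / (n : ℝ)) * ∑ i, sAlpha α (X i) b (Y i))
          ((1 / (n : ℝ)) • ∑ i, Dnice α (X i) β (Y i)) β :=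
        (HasFDerivAt.fun_sum fun i _ => hasFDerivAt_sAlpha α hα (X i) (Y i) β).const_mul _
      have hloc : IsLocalMax
          (fun b : Fin d → Fin (k + 1) → ℝ => (1 / (n : ℝ)) * ∑ i, sAlpha α (X i) b (Y i)) β :=
        Filter.Eventually.of_forall hmax
      have h0 := hloc.hasFDerivAt_eq_zero hf
      have h0v := congrArg (fun L : (Fin d → Fin (k + 1) → ℝ) →L[ℝ] ℝ =>
        L (Pi.single m (Pi.single t (1 : ℝ)))) h0
      simp only [ContinuousLinearMap.smul_apply, ContinuousLinearMap.sum_apply,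
        ContinuousLinearMap.zero_apply, smul_eq_mul, Dnice_apply] at h0v
      rw [← Finset.mul_sum] at h0v
      have hn' : (n : ℝ) ≠ 0 := Nat.cast_ne_zero.mpr hn.ne'
      have h1 : α * ∑ i, psiBlock α (X i) β (Y i) m t = 0 := by
        rcases mul_eq_zero.mp h0v with h | h
        · exact absurd h (by simp [hn'])
        · exact h
      rcases mul_eq_zero.mp h1 with h | h
      · exact absurd h hα.ne'
      · exact h

end
end

section
/- (Unbiasedness of the RP estimating equations under the model.) For every α ≥ 0, every parameter β, and every covariate x ∈ ℝ^{k+1}, the expectation of the RP score under the model distribution vanishes: Σ_{j=1}^{d+1} π_j(x,β)·Ψ_α(β,x,e_j) = 0 in ℝ^{d(k+1)}, where e_j denotes the j-th standard basis vector of ℝ^{d+1}. -/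
open Matrix Filter

noncomputable section

/-- unbiasedness of the RP estimating equations under the model:
for every `α ≥ 0`, parameter `β` and covariate `x`, the expectation of the RP score
under the model distribution vanishes: `∑_{j=1}^{d+1} π_j(x,β)·Ψ_α(β,x,e_j) = 0`. -/
theorem statement7 (d k : ℕ) (hd : 1 ≤ d) (hk : 1 ≤ k) (α : ℝ) (hα : 0 ≤ α)
    (β : Fin d → Fin (k + 1) → ℝ) (x : Fin (k + 1) → ℝ)
    (m : Fin d) (t : Fin (k + 1)) :
    ∑ j : Fin (d + 1), plrmPi x β j * psiBlock α x β (Pi.single j 1) m t = 0 := by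
  have hden : (0:ℝ) < 1 + ∑ s : Fin d, Real.exp (∑ t, x t * β s t) := by
    positivity
  have hpos : ∀ j : Fin (d + 1), 0 < plrmPi x β j := by
    intro j
    unfold plrmPi
    apply div_pos _ hden
    split
    · exact Real.exp_pos _
    · exact one_pos
  have hGam : 0 < Gam α x β := by
    apply Finset.sum_pos
    · intro j _
      exact Real.rpow_pos_of_pos (hpos j) _
    · exact ⟨0, Finset.mem_univ 0⟩
  have hUps : ∀ j : Fin (d + 1), Ups α x β (Pi.single j 1) = plrmPi x β j ^ α := by
    intro j
    unfold Ups
    rw [Finset.sum_eq_single j]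
    · simp
    · intro b _ hb
      simp [Pi.single_apply, hb]
    · simp
  have hrpow : ∀ j : Fin (d + 1), plrmPi x β j * plrmPi x β j ^ α = plrmPi x β j ^ (α + 1) := by
    intro j
    rw [Real.rpow_add (hpos j), Real.rpow_one, mul_comm]
  simp only [psiBlock, hUps]
  have : ∑ j : Fin (d + 1), plrmPi x β j *
      (Gam α x β ^ (-(α / (1 + α))) *
        (plrmPi x β m.castSucc ^ α * (Pi.single j (1:ℝ) : Fin (d+1) → ℝ) m.castSucc -
          plrmPi x β j ^ α / Gam α x β * plrmPi x β m.castSucc ^ (α + 1)) * x t)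
      = Gam α x β ^ (-(α / (1 + α))) * x t *
        ((∑ j : Fin (d + 1), plrmPi x β j * (plrmPi x β m.castSucc ^ α * (Pi.single j (1:ℝ) : Fin (d+1) → ℝ) m.castSucc)) -
         (∑ j : Fin (d + 1), plrmPi x β j ^ (α + 1)) / Gam α x β * plrmPi x β m.castSucc ^ (α + 1)) := by
    rw [Finset.sum_div, Finset.sum_mul, ← Finset.sum_sub_distrib, Finset.mul_sum]
    apply Finset.sum_congr rfl
    intro j _
    rw [← hrpow j]
    ring
  rw [this]
  have h1 : (∑ j : Fin (d + 1), plrmPi x β j * (plrmPi x β m.castSucc ^ α * (Pi.single j (1:ℝ) : Fin (d+1) → ℝ) m.castSucc))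
      = plrmPi x β m.castSucc ^ (α + 1) := by
    rw [Finset.sum_eq_single m.castSucc]
    · simp [← hrpow m.castSucc]
    · intro b _ hb
      simp [Pi.single_apply, hb]
    · simp
  rw [h1, ← Gam, div_self hGam.ne']
  ring

end
end

section
/- (Variance part of Theorem 2, single-observation content.) For every α ≥ 0, parameter β, and covariate x ∈ ℝ^{k+1}, the second moment of the RP score under the model satisfies Σ_{j=1}^{d+1} π_j(x,β)·Ψ_α(β,x,e_j)·Ψ_α(β,x,e_j)ᵀ = Γ(α)^{−2α/(1+α)}·J(2α) + Γ(α)^{−1−2α/(1+α)}·[ (Γ(2α)/Γ(α))·ξ(α)ξ(α)ᵀ − ξ(2α)ξ(α)ᵀ − ξ(α)ξ(2α)ᵀ ], an identity of d(k+1)×d(k+1) matrices, where e_j is the j-th standard basis vector of ℝ^{d+1}. -/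
open Matrix Filter

noncomputable section

/-- `Δ(p) = diag(p) − ppᵀ`. -/
def deltaMat {n : ℕ} (p : Fin n → ℝ) : Matrix (Fin n) (Fin n) ℝ :=
  Matrix.diagonal p - Matrix.vecMulVec p p

/-- `Δ*(π)`: `Δ(π)` with its last row deleted. -/
def deltaStar {d : ℕ} (π : Fin (d + 1) → ℝ) : Matrix (Fin d) (Fin (d + 1)) ℝ :=
  Matrix.of fun m j => deltaMat π m.castSucc j

/-- `diag^γ(π)`. -/
def diagPow {d : ℕ} (π : Fin (d + 1) → ℝ) (γ : ℝ) : Matrix (Fin (d + 1)) (Fin (d + 1)) ℝ :=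
  Matrix.diagonal fun j => π j ^ γ

/-- The RP score `Ψ_α(β,x,y) ∈ ℝ^{d(k+1)}`, indexed by block `m` and coordinate `t`. -/
def psiVec {d k : ℕ} (α : ℝ) (x : Fin (k + 1) → ℝ) (β : Fin d → Fin (k + 1) → ℝ)
    (y : Fin (d + 1) → ℝ) : Fin d × Fin (k + 1) → ℝ :=
  fun p =>
    Gam α x β ^ (-(α / (1 + α))) *
      (plrmPi x β p.1.castSucc ^ α * y p.1.castSucc -
        Ups α x β y / Gam α x β * plrmPi x β p.1.castSucc ^ (α + 1)) * x p.2

/-- `ξ(α) = (Δ*(π)·diag^{α−1}(π)·π) ⊗ x ∈ ℝ^{d(k+1)}`. -/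
def xiVec {d k : ℕ} (α : ℝ) (x : Fin (k + 1) → ℝ) (π : Fin (d + 1) → ℝ) :
    Fin d × Fin (k + 1) → ℝ :=
  fun p => (deltaStar π *ᵥ (diagPow π (α - 1) *ᵥ π)) p.1 * x p.2

/-- `J(α) = (Δ*(π)·diag^{α−1}(π)·Δ*(π)ᵀ) ⊗ (xxᵀ)`. -/
def Jmat {d k : ℕ} (α : ℝ) (x : Fin (k + 1) → ℝ) (π : Fin (d + 1) → ℝ) :
    Matrix (Fin d × Fin (k + 1)) (Fin d × Fin (k + 1)) ℝ :=
  Matrix.of fun p q =>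
    (deltaStar π * diagPow π (α - 1) * (deltaStar π)ᵀ) p.1 q.1 * (x p.2 * x q.2)

variable {d : ℕ}

lemma deltaStar_apply (p : Fin (d+1) → ℝ) (m : Fin d) (j : Fin (d+1)) :
    deltaStar p m j = (if m.castSucc = j then p m.castSucc else 0) - p m.castSucc * p j := by
  simp [deltaStar, deltaMat, Matrix.diagonal_apply, Matrix.vecMulVec_apply]

lemma rpow_succ' (p : ℝ) (hp : 0 < p) (γ : ℝ) : p * p ^ γ = p ^ (γ + 1) := by
  rw [Real.rpow_add_one hp.ne']; ring

lemma xi_eval (p : Fin (d+1) → ℝ) (hp : ∀ j, 0 < p j) (γ : ℝ) (m : Fin d) :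
    (deltaStar p *ᵥ (diagPow p (γ - 1) *ᵥ p)) m
      = p m.castSucc ^ (γ + 1) - p m.castSucc * ∑ j, p j ^ (γ + 1) := by
  rw [show (diagPow p (γ - 1) *ᵥ p) = fun j => p j ^ γ from funext fun j => by
    simp [diagPow, Matrix.mulVec_diagonal, Real.rpow_sub_one (hp j).ne',
      div_mul_cancel₀ _ (hp j).ne']]
  simp only [Matrix.mulVec, dotProduct, deltaStar_apply, sub_mul, ite_mul,
    zero_mul, Finset.sum_sub_distrib, Finset.sum_ite_eq, Finset.mem_univ, if_true, mul_assoc]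
  rw [← Finset.mul_sum, rpow_succ' _ (hp m.castSucc)]
  congr 2
  exact Finset.sum_congr rfl fun j _ => rpow_succ' _ (hp j) γ

lemma deltaStar_apply' (p : Fin (d+1) → ℝ) (m : Fin d) (j : Fin (d+1)) :
    deltaStar p m j = ((if m.castSucc = j then (1:ℝ) else 0) - p m.castSucc) * p j := by
  rw [deltaStar_apply]; split_ifs with h <;> simp [h] <;> ring

lemma J_eval (p : Fin (d+1) → ℝ) (hp : ∀ j, 0 < p j) (γ : ℝ) (m n : Fin d) :
    (deltaStar p * diagPow p (γ - 1) * (deltaStar p)ᵀ) m n =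
      (if m = n then p m.castSucc ^ (γ + 1) else 0)
        - p m.castSucc * p n.castSucc ^ (γ + 1) - p n.castSucc * p m.castSucc ^ (γ + 1)
        + p m.castSucc * p n.castSucc * ∑ j, p j ^ (γ + 1) := by
  have key2 : ∀ j : Fin (d+1), p j * p j ^ (γ - 1) * p j = p j ^ (γ + 1) := fun j => by
    have h0 : p j ≠ 0 := (hp j).ne'
    rw [Real.rpow_sub_one h0, Real.rpow_add_one h0]
    field_simp
  rw [Matrix.mul_apply]
  have step : ∀ j : Fin (d+1),
      (deltaStar p * diagPow p (γ - 1)) m j * (deltaStar p)ᵀ j n =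
        (if m.castSucc = j then (1:ℝ) else 0) *
            ((if n.castSucc = j then (1:ℝ) else 0) * p j ^ (γ + 1))
          - (if m.castSucc = j then (1:ℝ) else 0) * (p n.castSucc * p j ^ (γ + 1))
          - (if n.castSucc = j then (1:ℝ) else 0) * (p m.castSucc * p j ^ (γ + 1))
          + p m.castSucc * p n.castSucc * p j ^ (γ + 1) := fun j => by
    rw [Matrix.transpose_apply, show diagPow p (γ - 1) = Matrix.diagonal (fun j => p j ^ (γ-1)) from rfl,
      Matrix.mul_diagonal, deltaStar_apply', deltaStar_apply']
    linear_combination ((if m.castSucc = j then (1:ℝ) else 0) - p m.castSucc) *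
      ((if n.castSucc = j then (1:ℝ) else 0) - p n.castSucc) * key2 j
  rw [Finset.sum_congr rfl fun j _ => step j]
  simp only [Finset.sum_add_distrib, Finset.sum_sub_distrib, ite_mul, one_mul, zero_mul,
    Finset.sum_ite_eq, Finset.mem_univ, if_true, ← Finset.mul_sum]
  by_cases h : m = n
  · subst h
    simp only [if_pos rfl]
    try ring
  · have h' : ¬ n.castSucc = m.castSucc := fun hh => h (Fin.castSucc_inj.mp hh.symm)
    simp only [if_neg h', if_neg h]
    try ring

lemma sum_eval (p : Fin (d+1) → ℝ) (hp : ∀ j, 0 < p j) (α G : ℝ) (m n : Fin (d+1)) :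
    ∑ j, p j * (p m ^ α * (if m = j then (1:ℝ) else 0) - p j ^ α / G * p m ^ (α + 1)) *
        (p n ^ α * (if n = j then (1:ℝ) else 0) - p j ^ α / G * p n ^ (α + 1))
      = (if m = n then p m ^ (2*α + 1) else 0)
        - p m ^ (2*α + 1) * p n ^ (α + 1) / G - p n ^ (2*α + 1) * p m ^ (α + 1) / G
        + (∑ j, p j ^ (2*α + 1)) * (p m ^ (α + 1) * p n ^ (α + 1)) / G ^ 2 := by
  have key3 : ∀ j : Fin (d+1), p j ^ (2*α + 1) = p j * (p j ^ α) ^ 2 := fun j => by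
    have h1 : (2*α + 1 : ℝ) = α + (α + 1) := by ring
    rw [h1, Real.rpow_add (hp j), Real.rpow_add_one (hp j).ne']
    ring
  have step : ∀ j : Fin (d+1),
      p j * (p m ^ α * (if m = j then (1:ℝ) else 0) - p j ^ α / G * p m ^ (α + 1)) *
        (p n ^ α * (if n = j then (1:ℝ) else 0) - p j ^ α / G * p n ^ (α + 1)) =
      (if m = j then (1:ℝ) else 0) * ((if n = j then (1:ℝ) else 0) * (p j * (p m ^ α * p n ^ α)))
        - (if m = j then (1:ℝ) else 0) * (p j * p j ^ α * (p m ^ α * p n ^ (α + 1)) / G)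
        - (if n = j then (1:ℝ) else 0) * (p j * p j ^ α * (p n ^ α * p m ^ (α + 1)) / G)
        + p j ^ (2*α + 1) * (p m ^ (α + 1) * p n ^ (α + 1)) / G ^ 2 := fun j => by
    rw [key3 j]; ring
  rw [Finset.sum_congr rfl fun j _ => step j]
  simp only [Finset.sum_add_distrib, Finset.sum_sub_distrib, ite_mul, one_mul, zero_mul,
    Finset.sum_ite_eq, Finset.mem_univ, if_true, ← Finset.sum_mul, ← Finset.sum_div]
  by_cases h : m = n
  · subst h
    simp only [if_pos rfl, key3]
    ring
  · have h' : ¬ n = m := fun hh => h hh.symm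
    simp only [if_neg h, if_neg h', key3]
    ring

/-- variance part of Theorem 2, single observation: for `α ≥ 0`,
`∑_j π_j·Ψ_α(e_j)Ψ_α(e_j)ᵀ = Γ(α)^{−2α/(1+α)}·J(2α)
 + Γ(α)^{−1−2α/(1+α)}·[(Γ(2α)/Γ(α))·ξ(α)ξ(α)ᵀ − ξ(2α)ξ(α)ᵀ − ξ(α)ξ(2α)ᵀ]`. -/
theorem statement8 (d k : ℕ) (hd : 1 ≤ d) (hk : 1 ≤ k) (α : ℝ) (hα : 0 ≤ α)
    (β : Fin d → Fin (k + 1) → ℝ) (x : Fin (k + 1) → ℝ) :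
    (∑ j : Fin (d + 1), plrmPi x β j •
        Matrix.vecMulVec (psiVec α x β (Pi.single j 1)) (psiVec α x β (Pi.single j 1))) =
      Gam α x β ^ (-(2 * α / (1 + α))) • Jmat (2 * α) x (fun j => plrmPi x β j) +
      Gam α x β ^ (-1 - 2 * α / (1 + α)) •
        ((Gam (2 * α) x β / Gam α x β) •
            Matrix.vecMulVec (xiVec α x fun j => plrmPi x β j)
              (xiVec α x fun j => plrmPi x β j) -
          Matrix.vecMulVec (xiVec (2 * α) x fun j => plrmPi x β j)
            (xiVec α x fun j => plrmPi x β j) -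
          Matrix.vecMulVec (xiVec α x fun j => plrmPi x β j)
            (xiVec (2 * α) x fun j => plrmPi x β j)) := by
  have hp : ∀ j : Fin (d + 1), 0 < plrmPi x β j := by
    intro j
    unfold plrmPi
    apply div_pos
    · split <;> positivity
    · positivity
  have hGpos : 0 < Gam α x β :=
    Finset.sum_pos (fun j _ => Real.rpow_pos_of_pos (hp j) _) Finset.univ_nonempty
  have hGne : Gam α x β ≠ 0 := hGpos.ne'
  have hU : ∀ j, Ups α x β (Pi.single j 1) = plrmPi x β j ^ α := fun j => by
    simp [Ups, Pi.single_apply]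
  have hW2 : Gam α x β ^ (-(2 * α / (1 + α))) =
      Gam α x β ^ (-(α / (1 + α))) * Gam α x β ^ (-(α / (1 + α))) := by
    rw [← Real.rpow_add hGpos]; congr 1; ring
  have hW3 : Gam α x β ^ (-1 - 2 * α / (1 + α)) =
      Gam α x β ^ (-(α / (1 + α))) * Gam α x β ^ (-(α / (1 + α))) / Gam α x β := by
    have h1 : (-1 - 2 * α / (1 + α) : ℝ) = -(α / (1 + α)) + -(α / (1 + α)) + (-1) := by ring
    rw [h1, Real.rpow_add hGpos, Real.rpow_add hGpos, Real.rpow_neg_one]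
    ring
  have hG1 : (∑ j : Fin (d+1), plrmPi x β j ^ (α + 1)) = Gam α x β := rfl
  have hG2 : (∑ j : Fin (d+1), plrmPi x β j ^ (2*α + 1)) = Gam (2*α) x β := rfl
  ext ⟨m, t⟩ ⟨n, u⟩
  simp only [Matrix.sum_apply, Matrix.smul_apply, Matrix.add_apply, Matrix.sub_apply,
    Matrix.vecMulVec_apply, smul_eq_mul, Jmat, Matrix.of_apply, xiVec]
  rw [J_eval (plrmPi x β) hp (2*α) m n, xi_eval (plrmPi x β) hp α m,
    xi_eval (plrmPi x β) hp α n, xi_eval (plrmPi x β) hp (2*α) m,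
    xi_eval (plrmPi x β) hp (2*α) n, hG1, hG2]
  trans (Gam α x β ^ (-(α / (1 + α))) * Gam α x β ^ (-(α / (1 + α))) * (x t * x u) *
      ((if m.castSucc = n.castSucc then plrmPi x β m.castSucc ^ (2*α + 1) else 0)
        - plrmPi x β m.castSucc ^ (2*α + 1) * plrmPi x β n.castSucc ^ (α + 1) / Gam α x β
        - plrmPi x β n.castSucc ^ (2*α + 1) * plrmPi x β m.castSucc ^ (α + 1) / Gam α x β
        + Gam (2*α) x β * (plrmPi x β m.castSucc ^ (α + 1) * plrmPi x β n.castSucc ^ (α + 1)) /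
            Gam α x β ^ 2))
  · rw [← hG2, ← sum_eval (plrmPi x β) hp α (Gam α x β) m.castSucc n.castSucc, Finset.mul_sum]
    exact Finset.sum_congr rfl fun j _ => by
      simp only [psiVec, hU, Pi.single_apply]
      ring
  · rw [hW2, hW3]
    by_cases h : m = n
    · subst h
      simp only [if_pos rfl]
      field_simp
      ring
    · have h1 : ¬ m.castSucc = n.castSucc := fun hh => h (Fin.castSucc_inj.mp hh)
      simp only [if_neg h, if_neg h1]
      field_simp
      ring

end
end

section
/- (Appendix B uniform lower bound.) Let d ≥ 1 and α ≥ 0. For every probability vector π ∈ ℝ^{d+1} with all entries positive and π_1 = 1/2, setting Γ = Σ_{j=1}^{d+1} π_j^{α+1}, the first coordinate of the vector Γ^{−α/(1+α)}·Δ*(π)·diag^{α−1}(π)·(e_1 − (π_1^α/Γ)·π) is at least 2^{−(α+1)}·d^{−α} > 0, where e_1 is the first standard basis vector of ℝ^{d+1}. In particular there is a positive constant K_α (depending only on α and d) bounding this coordinate from below uniformly over all such π. -/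
open Matrix Filter

noncomputable section

/-- The first coordinate of `Γ^{−α/(1+α)}·Δ*(π)·diag^{α−1}(π)·(e_1 − (π_1^α/Γ)·π)`,
where `Γ = ∑_j π_j^{α+1}`. -/
def firstCoord (d : ℕ) (hd : 1 ≤ d) (α : ℝ) (π : Fin (d + 1) → ℝ) : ℝ :=
  ((∑ j, π j ^ (α + 1)) ^ (-(α / (1 + α))) •
      (deltaStar π *ᵥ (diagPow π (α - 1) *ᵥ
        ((Pi.single (0 : Fin (d + 1)) 1 : Fin (d + 1) → ℝ) -
          (π 0 ^ α / (∑ j, π j ^ (α + 1))) • π)))) ⟨0, hd⟩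

lemma firstCoord_eq (d : ℕ) (hd : 1 ≤ d) (α : ℝ) (π : Fin (d + 1) → ℝ)
    (hpos : ∀ j, 0 < π j) :
    firstCoord d hd α π = (∑ j, π j ^ (α + 1)) ^ (-(α / (1 + α))) *
      (π 0 ^ α * (1 - π 0 ^ (α + 1) / ∑ j, π j ^ (α + 1))) := by
  set Γ : ℝ := ∑ j, π j ^ (α + 1) with hΓ
  have hΓpos : 0 < Γ := Finset.sum_pos (fun j _ => Real.rpow_pos_of_pos (hpos j) _)
    Finset.univ_nonempty
  set c : ℝ := π 0 ^ α / Γ with hc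
  set v : Fin (d + 1) → ℝ :=
    (Pi.single (0 : Fin (d + 1)) 1 : Fin (d + 1) → ℝ) - c • π with hv
  have hrp : ∀ j, π j ^ (α - 1) * π j = π j ^ α := by
    intro j
    rw [← Real.rpow_add_one (hpos j).ne']; ring_nf
  have hpow : ∀ j, π j * (π j ^ (α - 1) * v j) = π j ^ α * v j := fun j => by
    calc π j * (π j ^ (α - 1) * v j) = π j ^ (α - 1) * π j * v j := by ring
      _ = π j ^ α * v j := by rw [hrp j]
  have hsum : ∑ j, π j ^ α * v j = 0 := by
    simp only [hv, Pi.sub_apply, Pi.smul_apply, smul_eq_mul, mul_sub, Finset.sum_sub_distrib]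
    have h1 : ∑ j, π j ^ α * (Pi.single (0 : Fin (d+1)) (1:ℝ) : Fin (d+1) → ℝ) j = π 0 ^ α := by
      rw [Finset.sum_eq_single 0]
      · simp
      · intro b _ hb; simp [Pi.single_apply, hb]
      · simp
    have h2 : ∑ j, π j ^ α * (c * π j) = c * Γ := by
      rw [Finset.mul_sum]
      refine Finset.sum_congr rfl fun j _ => ?_
      rw [Real.rpow_add_one (hpos j).ne']
      ring
    rw [h1, h2, hc, div_mul_cancel₀ _ hΓpos.ne']
    ring
  have hin : diagPow π (α - 1) *ᵥ v = fun j => π j ^ (α - 1) * v j := by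
    ext j; simp [diagPow, Matrix.mulVec_diagonal]
  have hcast : (⟨0, hd⟩ : Fin d).castSucc = (0 : Fin (d + 1)) := rfl
  unfold firstCoord
  simp only [Pi.smul_apply, smul_eq_mul, ← hΓ, ← hc, ← hv, hin]
  congr 1
  have hout : (deltaStar π *ᵥ fun j => π j ^ (α - 1) * v j) ⟨0, hd⟩ =
      ∑ j, (Matrix.diagonal π 0 j - π 0 * π j) * (π j ^ (α - 1) * v j) := by
    simp [deltaStar, deltaMat, Matrix.mulVec, dotProduct, Matrix.vecMulVec_apply, hcast]
  rw [hout]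
  have hd1 : ∑ j, Matrix.diagonal π 0 j * (π j ^ (α - 1) * v j)
      = π 0 * (π 0 ^ (α - 1) * v 0) := by
    rw [Finset.sum_eq_single 0]
    · simp
    · intro b _ hb; simp [Matrix.diagonal_apply, Ne.symm hb]
    · simp
  have hd2 : ∑ j, π 0 * π j * (π j ^ (α - 1) * v j) = 0 := by
    calc ∑ j, π 0 * π j * (π j ^ (α - 1) * v j)
        = π 0 * ∑ j, π j * (π j ^ (α - 1) * v j) := by
          rw [Finset.mul_sum]
          exact Finset.sum_congr rfl fun j _ => by ring
      _ = π 0 * ∑ j, π j ^ α * v j := by rw [Finset.sum_congr rfl fun j _ => hpow j]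
      _ = 0 := by rw [hsum, mul_zero]
  calc ∑ j, (Matrix.diagonal π 0 j - π 0 * π j) * (π j ^ (α - 1) * v j)
      = ∑ j, (Matrix.diagonal π 0 j * (π j ^ (α - 1) * v j)
          - π 0 * π j * (π j ^ (α - 1) * v j)) := by
        refine Finset.sum_congr rfl fun j _ => by ring
    _ = π 0 * (π 0 ^ (α - 1) * v 0) - 0 := by
        rw [Finset.sum_sub_distrib, hd1, hd2]
    _ = π 0 ^ α * (1 - π 0 ^ (α + 1) / Γ) := by
        have hv0 : v 0 = 1 - c * π 0 := by simp [hv]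
        rw [hv0, sub_zero]
        have h1 : π 0 * π 0 ^ (α - 1) = π 0 ^ α := by rw [mul_comm, hrp 0]
        have h2 : c * π 0 = π 0 ^ (α + 1) / Γ := by
          rw [hc, Real.rpow_add_one (hpos 0).ne']; ring
        calc π 0 * (π 0 ^ (α - 1) * (1 - c * π 0))
            = π 0 * π 0 ^ (α - 1) * (1 - c * π 0) := by ring
          _ = π 0 ^ α * (1 - π 0 ^ (α + 1) / Γ) := by rw [h1, h2]

/-- Power-mean lower bound on the tail sum. -/
lemma tail_sum_lb (d : ℕ) (α : ℝ) (hd : 1 ≤ d) (hα : 0 ≤ α) (π : Fin (d + 1) → ℝ)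
    (hpos : ∀ j, 0 < π j) (hsum : (∑ j, π j) = 1) (h0 : π 0 = 1 / 2) :
    (2:ℝ) ^ (-(α+1)) * (d:ℝ) ^ (-α) ≤
      ∑ j ∈ Finset.univ.erase (0 : Fin (d+1)), π j ^ (α+1) := by
  have hdpos : (0:ℝ) < d := by exact_mod_cast hd
  have hcard : (Finset.univ.erase (0 : Fin (d+1))).card = d := by
    rw [Finset.card_erase_of_mem (Finset.mem_univ _), Finset.card_univ, Fintype.card_fin]
    omega
  have htail : ∑ j ∈ Finset.univ.erase (0 : Fin (d+1)), π j = 1/2 := by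
    have := Finset.add_sum_erase Finset.univ π (Finset.mem_univ (0 : Fin (d+1)))
    rw [hsum, h0] at this
    linarith
  have hpm := Real.rpow_arith_mean_le_arith_mean_rpow (Finset.univ.erase (0 : Fin (d+1)))
    (fun _ => (d:ℝ)⁻¹) π (fun i _ => by positivity)
    (by rw [Finset.sum_const, hcard, nsmul_eq_mul, mul_inv_cancel₀ hdpos.ne'])
    (fun i _ => (hpos i).le) (by linarith : 1 ≤ α + 1)
  rw [← Finset.mul_sum, ← Finset.mul_sum, htail] at hpm
  have key : (2:ℝ) ^ (-(α+1)) * (d:ℝ) ^ (-α) ≤ (d:ℝ) * ((d:ℝ)⁻¹ * (1/2)) ^ (α+1) := by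
    have h1 : ((d:ℝ)⁻¹ * (1/2)) ^ (α+1) = ((d:ℝ)^(α+1))⁻¹ * ((2:ℝ)^(α+1))⁻¹ := by
      rw [Real.mul_rpow (by positivity) (by norm_num), Real.inv_rpow hdpos.le,
        one_div, Real.inv_rpow (by norm_num : (0:ℝ) ≤ 2)]
    have h2 : (d:ℝ) * ((d:ℝ)^(α+1))⁻¹ = (d:ℝ)^(-α) := by
      rw [← Real.rpow_neg hdpos.le,
        show (d:ℝ) * (d:ℝ)^(-(α+1)) = (d:ℝ)^(1:ℝ) * (d:ℝ)^(-(α+1)) by rw [Real.rpow_one],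
        ← Real.rpow_add hdpos]
      congr 1; ring
    have h3 : ((2:ℝ)^(α+1))⁻¹ = (2:ℝ)^(-(α+1)) := (Real.rpow_neg (by norm_num) _).symm
    rw [h1, ← mul_assoc, h2, h3, mul_comm]
  calc (2:ℝ) ^ (-(α+1)) * (d:ℝ) ^ (-α) ≤ (d:ℝ) * ((d:ℝ)⁻¹ * (1/2)) ^ (α+1) := key
    _ ≤ (d:ℝ) * ((d:ℝ)⁻¹ * ∑ j ∈ Finset.univ.erase (0 : Fin (d+1)), π j ^ (α+1)) :=
        mul_le_mul_of_nonneg_left hpm hdpos.le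
    _ = ∑ j ∈ Finset.univ.erase (0 : Fin (d+1)), π j ^ (α+1) := by
        rw [← mul_assoc, mul_inv_cancel₀ hdpos.ne', one_mul]

/-- Appendix B uniform lower bound: for every positive probability
vector `π` with `π_1 = 1/2`, the first coordinate of
`Γ^{−α/(1+α)}·Δ*(π)·diag^{α−1}(π)·(e_1 − (π_1^α/Γ)·π)` is at least
`2^{−(α+1)}·d^{−α} > 0`; in particular there is a positive constant `K_α`
(depending only on `α` and `d`) bounding this coordinate from below uniformly. -/
theorem statement16 (d : ℕ) (hd : 1 ≤ d) (α : ℝ) (hα : 0 ≤ α) :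
    (∀ π : Fin (d + 1) → ℝ, (∀ j, 0 < π j) → (∑ j, π j) = 1 → π 0 = 1 / 2 →
      (2 : ℝ) ^ (-(α + 1)) * (d : ℝ) ^ (-α) ≤ firstCoord d hd α π) ∧
    0 < (2 : ℝ) ^ (-(α + 1)) * (d : ℝ) ^ (-α) ∧
    ∃ K : ℝ, 0 < K ∧
      ∀ π : Fin (d + 1) → ℝ, (∀ j, 0 < π j) → (∑ j, π j) = 1 → π 0 = 1 / 2 →
        K ≤ firstCoord d hd α π := by
  have hdpos : (0:ℝ) < d := by exact_mod_cast hd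
  have hbpos : 0 < (2 : ℝ) ^ (-(α + 1)) * (d : ℝ) ^ (-α) :=
    mul_pos (Real.rpow_pos_of_pos two_pos _) (Real.rpow_pos_of_pos hdpos _)
  have main : ∀ π : Fin (d + 1) → ℝ, (∀ j, 0 < π j) → (∑ j, π j) = 1 → π 0 = 1 / 2 →
      (2 : ℝ) ^ (-(α + 1)) * (d : ℝ) ^ (-α) ≤ firstCoord d hd α π := by
    intro π hpos hsum h0
    rw [firstCoord_eq d hd α π hpos]
    set Γ : ℝ := ∑ j, π j ^ (α + 1) with hΓ
    set S : ℝ := ∑ j ∈ Finset.univ.erase (0 : Fin (d+1)), π j ^ (α+1) with hS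
    have hΓpos : 0 < Γ := Finset.sum_pos (fun j _ => Real.rpow_pos_of_pos (hpos j) _)
      Finset.univ_nonempty
    have hΓS : Γ = π 0 ^ (α+1) + S :=
      (Finset.add_sum_erase Finset.univ (fun j => π j ^ (α+1)) (Finset.mem_univ 0)).symm
    have hSlb : (2:ℝ) ^ (-(α+1)) * (d:ℝ) ^ (-α) ≤ S :=
      tail_sum_lb d α hd hα π hpos hsum h0
    have hSpos : 0 < S := lt_of_lt_of_le hbpos hSlb
    -- each coordinate is at most 1/2
    have hle : ∀ j, π j ≤ 1/2 := by
      intro j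
      rcases eq_or_ne j 0 with rfl | hj
      · rw [h0]
      · have h1 : π j ≤ ∑ k ∈ Finset.univ.erase (0 : Fin (d+1)), π k :=
          Finset.single_le_sum (fun k _ => (hpos k).le)
            (Finset.mem_erase.2 ⟨hj, Finset.mem_univ j⟩)
        have h2 : ∑ k ∈ Finset.univ.erase (0 : Fin (d+1)), π k = 1/2 := by
          have := Finset.add_sum_erase Finset.univ π (Finset.mem_univ (0 : Fin (d+1)))
          rw [hsum, h0] at this; linarith
        linarith
    have hhalfpos : (0:ℝ) < (1/2:ℝ)^α := Real.rpow_pos_of_pos (by norm_num) _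
    -- Γ ≤ (1/2)^α
    have hΓle : Γ ≤ (1/2:ℝ)^α := by
      have : Γ ≤ ∑ j, (1/2:ℝ)^α * π j := by
        refine Finset.sum_le_sum fun j _ => ?_
        rw [Real.rpow_add_one (hpos j).ne']
        exact mul_le_mul_of_nonneg_right
          (Real.rpow_le_rpow (hpos j).le (hle j) hα) (hpos j).le
      rwa [← Finset.mul_sum, hsum, mul_one] at this
    have hΓle1 : Γ ≤ 1 :=
      hΓle.trans (Real.rpow_le_one (by norm_num) (by norm_num) hα)
    have hA : 1 ≤ Γ ^ (-(α / (1 + α))) :=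
      Real.one_le_rpow_of_pos_of_le_one_of_nonpos hΓpos hΓle1
        (neg_nonpos.2 (div_nonneg hα (by linarith)))
    have hC : 1 - π 0 ^ (α+1) / Γ = S / Γ := by
      rw [hΓS, h0]
      field_simp
      ring
    have hπ0α : π 0 ^ α = (1/2:ℝ)^α := by rw [h0]
    have hinv : ((1/2:ℝ)^α)⁻¹ ≤ Γ⁻¹ := by
      apply inv_anti₀ hΓpos hΓle
    have hmid : S ≤ π 0 ^ α * (1 - π 0 ^ (α+1) / Γ) := by
      rw [hC, hπ0α, div_eq_mul_inv]
      calc S = (1/2:ℝ)^α * (S * ((1/2:ℝ)^α)⁻¹) := by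
              field_simp
        _ ≤ (1/2:ℝ)^α * (S * Γ⁻¹) :=
              mul_le_mul_of_nonneg_left
                (mul_le_mul_of_nonneg_left hinv hSpos.le) hhalfpos.le
    have hmidnn : 0 ≤ π 0 ^ α * (1 - π 0 ^ (α+1) / Γ) := le_trans hSpos.le hmid
    calc (2:ℝ) ^ (-(α + 1)) * (d:ℝ) ^ (-α) ≤ S := hSlb
      _ ≤ π 0 ^ α * (1 - π 0 ^ (α+1) / Γ) := hmid
      _ ≤ Γ ^ (-(α / (1 + α))) * (π 0 ^ α * (1 - π 0 ^ (α+1) / Γ)) :=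
            le_mul_of_one_le_left hmidnn hA
  exact ⟨main, hbpos, ⟨(2 : ℝ) ^ (-(α + 1)) * (d : ℝ) ^ (-α), hbpos, main⟩⟩

end
end
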